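/- Let C be a 7-element cap in (Z/2Z)^n whose affine span has dimension 5. Then C is complete (its quad closure equals its 5-dimensional affine span, of size 32) and there is an exclude point of C of multiplicity at least 2. -/
import Mathlib

def IsCap {n : ℕ} (S : Set (Fin n → ZMod 2)) : Prop :=
  ∀ a ∈ S, ∀ b ∈ S, ∀ c ∈ S, ∀ d ∈ S,
    a ≠ b → a ≠ c → a ≠ d → b ≠ c → b ≠ d → c ≠ d → a + b + c + d ≠ 0

def excl {n : ℕ} (S : Finset (Fin n → ZMod 2)) : Finset (Fin n → ZMod 2) :=
  (S.powersetCard 3).image (fun t => t.sum id)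

def mult {n : ℕ} (S : Finset (Fin n → ZMod 2)) (p : Fin n → ZMod 2) : ℕ :=
  ((S.powersetCard 3).filter (fun t => t.sum id = p)).card

namespace SevenCap

variable {n : ℕ}

lemma add_self (x : Fin n → ZMod 2) : x + x = 0 := by
  funext i
  have : ∀ a : ZMod 2, a + a = 0 := by decide
  exact this _

lemma eq_of_add_eq_zero {x y : Fin n → ZMod 2} (h : x + y = 0) : x = y := by
  have := congrArg (· + y) h
  simpa [add_assoc, add_self] using this

lemma sum_triple {a b c : Fin n → ZMod 2} (hab : a ≠ b) (hac : a ≠ c) (hbc : b ≠ c) :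
    ({a, b, c} : Finset (Fin n → ZMod 2)).sum id = a + b + c := by
  rw [Finset.sum_insert (by simp [hab, hac]), Finset.sum_pair hbc]
  simp [add_assoc]

lemma card_triple {a b c : Fin n → ZMod 2} (hab : a ≠ b) (hac : a ≠ c) (hbc : b ≠ c) :
    ({a, b, c} : Finset (Fin n → ZMod 2)).card = 3 := by
  rw [Finset.card_insert_of_notMem (by simp [hab, hac]), Finset.card_pair hbc]

lemma mem_excl_iff {B : Finset (Fin n → ZMod 2)} {p : Fin n → ZMod 2} :
    p ∈ excl B ↔ ∃ a ∈ B, ∃ b ∈ B, ∃ c ∈ B,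
      a ≠ b ∧ a ≠ c ∧ b ≠ c ∧ a + b + c = p := by
  constructor
  · rintro hp
    rw [excl, Finset.mem_image] at hp
    obtain ⟨t, ht, hsum⟩ := hp
    rw [Finset.mem_powersetCard] at ht
    obtain ⟨a, b, c, hab, hac, hbc, rfl⟩ := Finset.card_eq_three.mp ht.2
    have hsub := ht.1
    refine ⟨a, hsub (by simp), b, hsub (by simp), c, hsub (by simp), hab, hac, hbc, ?_⟩
    rw [← hsum, sum_triple hab hac hbc]
  · rintro ⟨a, ha, b, hb, c, hc, hab, hac, hbc, rfl⟩
    rw [excl, Finset.mem_image]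
    refine ⟨{a, b, c}, ?_, sum_triple hab hac hbc⟩
    rw [Finset.mem_powersetCard]
    exact ⟨by intro x hx; simp at hx; rcases hx with rfl|rfl|rfl <;> assumption,
      card_triple hab hac hbc⟩

lemma excl_notMem {B : Finset (Fin n → ZMod 2)} (hB : IsCap (B : Set (Fin n → ZMod 2)))
    {p : Fin n → ZMod 2} (hp : p ∈ excl B) : p ∉ B := by
  intro hpB
  obtain ⟨a, ha, b, hb, c, hc, hab, hac, hbc, hsum⟩ := mem_excl_iff.mp hp
  by_cases hpa : p = a
  · subst hpa
    have h1 : (p + b + c) + p = (p + p) + (b + c) := by ring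
    rw [hsum, add_self, zero_add] at h1
    replace h1 : b + c = 0 := h1.symm
    exact hbc (eq_of_add_eq_zero h1)
  by_cases hpb : p = b
  · subst hpb
    have h1 : (a + p + c) + p = (p + p) + (a + c) := by ring
    rw [hsum, add_self, zero_add] at h1
    replace h1 : a + c = 0 := h1.symm
    exact hac (eq_of_add_eq_zero h1)
  by_cases hpc : p = c
  · subst hpc
    have h1 : (a + b + p) + p = (p + p) + (a + b) := by ring
    rw [hsum, add_self, zero_add] at h1
    replace h1 : a + b = 0 := h1.symm
    exact hab (eq_of_add_eq_zero h1)
  · refine hB a ha b hb c hc p hpB hab hac (Ne.symm hpa) hbc (Ne.symm hpb) (Ne.symm hpc) ?_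
    rw [hsum]; exact add_self p

lemma triples_disjoint {B : Finset (Fin n → ZMod 2)} (hB : IsCap (B : Set (Fin n → ZMod 2)))
    {t1 t2 : Finset (Fin n → ZMod 2)} (h1 : t1 ∈ B.powersetCard 3) (h2 : t2 ∈ B.powersetCard 3)
    (hne : t1 ≠ t2) (hsum : t1.sum id = t2.sum id) : Disjoint t1 t2 := by
  rw [Finset.mem_powersetCard] at h1 h2
  by_contra hdis
  have key : (t1 \ t2).sum id = (t2 \ t1).sum id := by
    have e1 : (t1 \ (t1 ∩ t2)).sum id + (t1 ∩ t2).sum id = t1.sum id :=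
      Finset.sum_sdiff Finset.inter_subset_left
    have e2 : (t2 \ (t2 ∩ t1)).sum id + (t2 ∩ t1).sum id = t2.sum id :=
      Finset.sum_sdiff Finset.inter_subset_left
    rw [Finset.sdiff_inter_self_left] at e1 e2
    rw [Finset.inter_comm t2 t1] at e2
    exact add_right_cancel (e1.trans (hsum.trans e2.symm))
  have hicard : (t1 ∩ t2).card ≤ 2 := by
    by_contra h
    push_neg at h
    have hle : t1.card ≤ (t1 ∩ t2).card := by omega
    have heq : t1 ∩ t2 = t1 := Finset.eq_of_subset_of_card_le Finset.inter_subset_left hle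
    have ht12 : t1 ⊆ t2 := by rw [← heq]; exact Finset.inter_subset_right
    exact hne (Finset.eq_of_subset_of_card_le ht12 (by omega))
  have hipos : 1 ≤ (t1 ∩ t2).card := by
    rw [Finset.disjoint_iff_inter_eq_empty] at hdis
    exact Finset.card_pos.mpr (Finset.nonempty_iff_ne_empty.mpr hdis)
  have hd1 : (t1 \ t2).card + (t1 ∩ t2).card = t1.card := Finset.card_sdiff_add_card_inter t1 t2
  have hd2 : (t2 \ t1).card + (t2 ∩ t1).card = t2.card := Finset.card_sdiff_add_card_inter t2 t1
  rw [Finset.inter_comm t2 t1] at hd2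
  interval_cases hi : (t1 ∩ t2).card
  · -- inter card 1, diffs card 2
    obtain ⟨a, b, hab, hab'⟩ := Finset.card_eq_two.mp (show (t1 \ t2).card = 2 by omega)
    obtain ⟨c, d, hcd, hcd'⟩ := Finset.card_eq_two.mp (show (t2 \ t1).card = 2 by omega)
    have ha1 : a ∈ t1 \ t2 := by rw [hab']; simp
    have hb1 : b ∈ t1 \ t2 := by rw [hab']; simp
    have hc2 : c ∈ t2 \ t1 := by rw [hcd']; simp
    have hd2' : d ∈ t2 \ t1 := by rw [hcd']; simp
    rw [Finset.mem_sdiff] at ha1 hb1 hc2 hd2'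
    rw [hab', hcd', Finset.sum_pair hab, Finset.sum_pair hcd] at key
    simp only [id_eq] at key
    have hac : a ≠ c := fun h => ha1.2 (h ▸ hc2.1)
    have had : a ≠ d := fun h => ha1.2 (h ▸ hd2'.1)
    have hbc : b ≠ c := fun h => hb1.2 (h ▸ hc2.1)
    have hbd : b ≠ d := fun h => hb1.2 (h ▸ hd2'.1)
    refine hB a (h1.1 ha1.1) b (h1.1 hb1.1) c (h2.1 hc2.1) d (h2.1 hd2'.1)
      hab hac had hbc hbd hcd ?_
    have : a + b + c + d = (a + b) + (c + d) := by ring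
    rw [this, key, add_self]
  · -- inter card 2, diffs card 1
    obtain ⟨a, hab'⟩ := Finset.card_eq_one.mp (show (t1 \ t2).card = 1 by omega)
    obtain ⟨c, hcd'⟩ := Finset.card_eq_one.mp (show (t2 \ t1).card = 1 by omega)
    have ha1 : a ∈ t1 \ t2 := by rw [hab']; simp
    have hc2 : c ∈ t2 \ t1 := by rw [hcd']; simp
    rw [Finset.mem_sdiff] at ha1 hc2
    rw [hab', hcd', Finset.sum_singleton, Finset.sum_singleton] at key
    simp only [id_eq] at key
    exact ha1.2 (key ▸ hc2.1)

lemma fiber_le_two {B : Finset (Fin n → ZMod 2)} (hB : IsCap (B : Set (Fin n → ZMod 2)))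
    (h8 : B.card ≤ 8) (p : Fin n → ZMod 2) :
    ((B.powersetCard 3).filter (fun t => t.sum id = p)).card ≤ 2 := by
  by_contra h
  push_neg at h
  obtain ⟨s, hs, hs3⟩ := Finset.exists_subset_card_eq (show 3 ≤ _ from h)
  obtain ⟨t1, t2, t3, h12, h13, h23, rfl⟩ := Finset.card_eq_three.mp hs3
  have m1 := hs (by simp : t1 ∈ ({t1, t2, t3} : Finset _))
  have m2 := hs (by simp : t2 ∈ ({t1, t2, t3} : Finset _))
  have m3 := hs (by simp : t3 ∈ ({t1, t2, t3} : Finset _))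
  rw [Finset.mem_filter] at m1 m2 m3
  have d12 := triples_disjoint hB m1.1 m2.1 h12 (m1.2.trans m2.2.symm)
  have d13 := triples_disjoint hB m1.1 m3.1 h13 (m1.2.trans m3.2.symm)
  have d23 := triples_disjoint hB m2.1 m3.1 h23 (m2.2.trans m3.2.symm)
  have hc1 : t1.card = 3 := (Finset.mem_powersetCard.mp m1.1).2
  have hc2 : t2.card = 3 := (Finset.mem_powersetCard.mp m2.1).2
  have hc3 : t3.card = 3 := (Finset.mem_powersetCard.mp m3.1).2
  have hsub : t1 ∪ t2 ∪ t3 ⊆ B :=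
    Finset.union_subset (Finset.union_subset (Finset.mem_powersetCard.mp m1.1).1
      (Finset.mem_powersetCard.mp m2.1).1) (Finset.mem_powersetCard.mp m3.1).1
  have hcard : (t1 ∪ t2 ∪ t3).card = 9 := by
    rw [Finset.card_union_of_disjoint (by
      rw [Finset.disjoint_union_left]; exact ⟨d13, d23⟩),
      Finset.card_union_of_disjoint d12, hc1, hc2, hc3]
  have := Finset.card_le_card hsub
  omega

set_option maxHeartbeats 1000000 in
lemma no_eight_cap {B : Finset (Fin n → ZMod 2)} (hB : IsCap (B : Set (Fin n → ZMod 2)))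
    (h8 : B.card = 8) (Af : Finset (Fin n → ZMod 2)) (hBA : B ⊆ Af)
    (hE : excl B ⊆ Af) (hAf : Af.card = 32) : False := by
  have hfib : 56 ≤ 2 * (excl B).card := by
    have hb := Finset.card_le_mul_card_image (f := fun t => t.sum id)
      (B.powersetCard 3) 2 (fun p _ => fiber_le_two hB (le_of_eq h8) p)
    rw [Finset.card_powersetCard, h8] at hb
    exact hb
  have hdisj : Disjoint (excl B) B :=
    Finset.disjoint_left.mpr (fun p hp => excl_notMem hB hp)
  have hsub : excl B ∪ B ⊆ Af := Finset.union_subset hE hBA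
  have := Finset.card_le_card hsub
  rw [Finset.card_union_of_disjoint hdisj, h8, hAf] at this
  omega

lemma triple_sum_mem_span {S : Set (Fin n → ZMod 2)} {a b c : Fin n → ZMod 2}
    (ha : a ∈ affineSpan (ZMod 2) S) (hb : b ∈ affineSpan (ZMod 2) S)
    (hc : c ∈ affineSpan (ZMod 2) S) : a + b + c ∈ affineSpan (ZMod 2) S := by
  have hd : a -ᵥ b ∈ (affineSpan (ZMod 2) S).direction :=
    AffineSubspace.vsub_mem_direction ha hb
  have hm := AffineSubspace.vadd_mem_of_mem_direction hd hc
  have : (a -ᵥ b) +ᵥ c = a + b + c := by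
    show (a - b) + c = a + b + c
    have : a - b = a + b := by
      funext i
      simp only [Pi.sub_apply, Pi.add_apply, sub_eq_add_neg]
      congr 1
      have : ∀ x : ZMod 2, -x = x := by decide
      exact this _
    rw [this]
  rwa [this] at hm

lemma cap_insert {C : Finset (Fin n → ZMod 2)} {p : Fin n → ZMod 2}
    (hC : IsCap (C : Set (Fin n → ZMod 2))) (hp1 : p ∉ C) (hp2 : p ∉ excl C) :
    IsCap ((insert p C : Finset (Fin n → ZMod 2)) : Set (Fin n → ZMod 2)) := by
  intro a ha b hb c hc d hd hab hac had hbc hbd hcd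
  simp only [Finset.coe_insert, Set.mem_insert_iff, Finset.mem_coe] at ha hb hc hd
  have key : ∀ x y z : Fin n → ZMod 2, x ∈ C → y ∈ C → z ∈ C → x ≠ y → x ≠ z → y ≠ z →
      p + x + y + z ≠ 0 := by
    intro x y z hx hy hz hxy hxz hyz h
    apply hp2
    have h1 : p + (x + y + z) = 0 := by rw [← h]; ring
    exact mem_excl_iff.mpr ⟨x, hx, y, hy, z, hz, hxy, hxz, hyz, (eq_of_add_eq_zero h1).symm⟩
  rcases ha with rfl | ha
  · rcases hb with rfl | hb
    · exact absurd rfl hab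
    rcases hc with rfl | hc
    · exact absurd rfl hac
    rcases hd with rfl | hd
    · exact absurd rfl had
    exact key b c d hb hc hd hbc hbd hcd
  rcases hb with rfl | hb
  · rcases hc with rfl | hc
    · exact absurd rfl hbc
    rcases hd with rfl | hd
    · exact absurd rfl hbd
    intro h0
    exact key a c d ha hc hd hac had hcd (by rw [← h0]; ring)
  rcases hc with rfl | hc
  · rcases hd with rfl | hd
    · exact absurd rfl hcd
    intro h0
    exact key a b d ha hb hd hab had hbd (by rw [← h0]; ring)
  rcases hd with rfl | hd
  · intro h0
    exact key a b c ha hb hc hab hac hbc (by rw [← h0]; ring)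
  exact hC a ha b hb c hc d hd hab hac had hbc hbd hcd

end SevenCap

open SevenCap in
/-- A 7-element cap whose affine span has dimension 5 is complete: its quad closure
equals its affine span (which has 32 points), and it has an exclude point of
multiplicity at least 2. -/
theorem seven_cap_dim_five {n : ℕ} (C : Finset (Fin n → ZMod 2))
    (hC : IsCap (C : Set (Fin n → ZMod 2))) (hcard : C.card = 7)
    (hdim : Module.finrank (ZMod 2)
      (affineSpan (ZMod 2) (C : Set (Fin n → ZMod 2))).direction = 5) :
    ((C ∪ excl C : Finset (Fin n → ZMod 2)) : Set (Fin n → ZMod 2)) =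
        (affineSpan (ZMod 2) (C : Set (Fin n → ZMod 2)) : Set (Fin n → ZMod 2)) ∧
      Nat.card (affineSpan (ZMod 2) (C : Set (Fin n → ZMod 2)) :
        Set (Fin n → ZMod 2)) = 32 ∧
      ∃ p ∈ excl C, 2 ≤ mult C p := by
  classical
  set A := affineSpan (ZMod 2) (C : Set (Fin n → ZMod 2)) with hA
  have hCne : (C : Set (Fin n → ZMod 2)).Nonempty := by
    rw [Finset.coe_nonempty]
    exact Finset.card_pos.mp (by omega)
  obtain ⟨p0, hp0C⟩ := hCne
  have hp0 : p0 ∈ A := subset_affineSpan (ZMod 2) _ hp0C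
  -- cardinality of the span
  have e : (A : Set (Fin n → ZMod 2)) ≃ A.direction :=
    { toFun := fun x => ⟨x.1 -ᵥ p0, AffineSubspace.vsub_mem_direction x.2 hp0⟩
      invFun := fun v => ⟨v.1 +ᵥ p0, AffineSubspace.vadd_mem_of_mem_direction v.2 hp0⟩
      left_inv := fun x => Subtype.ext (vsub_vadd _ _)
      right_inv := fun v => Subtype.ext (vadd_vsub _ _) }
  haveI : Fintype A.direction := Fintype.ofFinite _
  have card32 : Nat.card (A : Set (Fin n → ZMod 2)) = 32 := by
    rw [Nat.card_congr e, Nat.card_eq_fintype_card,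
      Module.card_eq_pow_finrank (K := ZMod 2), ZMod.card, hdim]
    norm_num
  -- the span as a finset
  haveI : Fintype (A : Set (Fin n → ZMod 2)) := Fintype.ofFinite _
  set Af : Finset (Fin n → ZMod 2) := (A : Set (Fin n → ZMod 2)).toFinset with hAfdef
  have hAfmem : ∀ x, x ∈ Af ↔ x ∈ A := by
    intro x
    rw [hAfdef, Set.mem_toFinset]
    rfl
  have hAfcard : Af.card = 32 := by
    rw [← card32, hAfdef, Set.toFinset_card, Nat.card_eq_fintype_card]
  -- the excludes of any subset of A lie in A
  have hEC : ∀ B : Finset (Fin n → ZMod 2), (B : Set (Fin n → ZMod 2)) ⊆ A → excl B ⊆ Af := by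
    intro B hBA q hq
    obtain ⟨a, ha, b, hb, c, hc, _, _, _, rfl⟩ := mem_excl_iff.mp hq
    exact (hAfmem _).mpr (triple_sum_mem_span (hBA ha) (hBA hb) (hBA hc))
  have hCA : (C : Set (Fin n → ZMod 2)) ⊆ A := subset_affineSpan (ZMod 2) _
  -- part one
  have part1 : ((C ∪ excl C : Finset (Fin n → ZMod 2)) : Set (Fin n → ZMod 2)) =
      (A : Set (Fin n → ZMod 2)) := by
    apply Set.Subset.antisymm
    · intro x hx
      rw [Finset.coe_union, Set.mem_union] at hx
      rcases hx with hx | hx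
      · exact hCA hx
      · exact (hAfmem _).mp (hEC C hCA hx)
    · intro x hxA
      by_contra hx
      rw [Finset.coe_union, Set.mem_union, Finset.mem_coe, Finset.mem_coe] at hx
      push_neg at hx
      obtain ⟨hxC, hxE⟩ := hx
      have hBcap : IsCap ((insert x C : Finset (Fin n → ZMod 2)) : Set (Fin n → ZMod 2)) :=
        cap_insert hC hxC hxE
      have hBcard : (insert x C).card = 8 := by
        rw [Finset.card_insert_of_notMem hxC, hcard]
      have hBA : ((insert x C : Finset (Fin n → ZMod 2)) : Set (Fin n → ZMod 2)) ⊆ A := by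
        rw [Finset.coe_insert]
        exact Set.insert_subset hxA hCA
      refine no_eight_cap hBcap hBcard Af ?_ (hEC _ hBA) hAfcard
      intro y hy
      exact (hAfmem _).mpr (hBA hy)
  refine ⟨part1, card32, ?_⟩
  -- multiplicity
  by_contra hcon
  push_neg at hcon
  have hb := Finset.card_le_mul_card_image (f := fun t => t.sum id)
    (C.powersetCard 3) 1 (fun q hq => by
      have h1 := hcon q hq
      rw [mult] at h1
      exact Nat.lt_succ_iff.mp h1)
  rw [Finset.card_powersetCard, hcard] at hb
  have hsub : excl C ⊆ Af := hEC C hCA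
  have hle := Finset.card_le_card hsub
  rw [hAfcard, excl] at hle
  rw [show Nat.choose 7 3 = 35 from by decide] at hb
  omega
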